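/- arXiv:1211.3621 — 5 statements merged into one kernel-verified Lean document; each statement's English description precedes it below -/
import Mathlib

section
/- Let ψ(σ) = ∫₀^σ log(e + u) du. Then for every constant c > 0, ∫₁^∞ ( ∫₁^t exp( −c ∫ᵣ^t ψ(σ) dσ ) dr ) dt = ∞. -/
open MeasureTheory intervalIntegral Filter Real

noncomputable def psiAux (σ : ℝ) : ℝ := ∫ u in (0:ℝ)..σ, Real.log (Real.exp 1 + |u|)

lemma contLogAbs : Continuous fun u : ℝ => Real.log (Real.exp 1 + |u|) := by
  apply (continuous_const.add continuous_abs).log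
  intro x
  exact (by positivity : (0:ℝ) < Real.exp 1 + |x|).ne'

lemma oneLeLogAbs (u : ℝ) : 1 ≤ Real.log (Real.exp 1 + |u|) := by
  rw [Real.le_log_iff_exp_le (by positivity)]
  nlinarith [abs_nonneg u]

lemma psiAux_cont : Continuous psiAux :=
  intervalIntegral.continuous_primitive (fun a b => (contLogAbs.intervalIntegrable a b)) 0

lemma psiAux_mono : Monotone psiAux := by
  intro a b hab
  have h : psiAux a + ∫ u in a..b, Real.log (Real.exp 1 + |u|) = psiAux b :=
    integral_add_adjacent_intervals (contLogAbs.intervalIntegrable 0 a)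
      (contLogAbs.intervalIntegrable a b)
  have h2 : 0 ≤ ∫ u in a..b, Real.log (Real.exp 1 + |u|) :=
    intervalIntegral.integral_nonneg hab (fun u _ => le_trans zero_le_one (oneLeLogAbs u))
  linarith

lemma psiAux_lb {t : ℝ} (ht : 0 ≤ t) : t ≤ psiAux t := by
  have : (∫ u in (0:ℝ)..t, (1:ℝ)) ≤ psiAux t := by
    apply intervalIntegral.integral_mono_on ht (by simp [_root_.intervalIntegrable_const])
      (contLogAbs.intervalIntegrable 0 t)
    exact fun u _ => oneLeLogAbs u
  simpa using this

lemma psiAux_ub {t : ℝ} (ht : 0 ≤ t) : psiAux t ≤ t * Real.log (Real.exp 1 + t) := by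
  have : psiAux t ≤ ∫ u in (0:ℝ)..t, Real.log (Real.exp 1 + t) := by
    apply intervalIntegral.integral_mono_on ht (contLogAbs.intervalIntegrable 0 t)
      (by simp [_root_.intervalIntegrable_const])
    intro u hu
    apply Real.log_le_log (by positivity)
    have : |u| ≤ t := by
      rw [abs_le]; exact ⟨by linarith [hu.1], hu.2⟩
    linarith
  simpa using this

noncomputable def Gaux (c t : ℝ) : ℝ :=
  ∫ r in (1:ℝ)..t, Real.exp (-(c * ∫ σ in r..t, psiAux σ))

lemma contInnerExp (c t : ℝ) :
    Continuous fun r => Real.exp (-(c * ∫ σ in r..t, psiAux σ)) := by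
  have hP : Continuous fun x => ∫ σ in (0:ℝ)..x, psiAux σ :=
    intervalIntegral.continuous_primitive (fun a b => psiAux_cont.intervalIntegrable a b) 0
  have : (fun r => Real.exp (-(c * ∫ σ in r..t, psiAux σ)))
      = fun r => Real.exp (-(c * ((∫ σ in (0:ℝ)..t, psiAux σ) - ∫ σ in (0:ℝ)..r, psiAux σ))) := by
    funext r
    congr 2
    rw [← integral_add_adjacent_intervals (psiAux_cont.intervalIntegrable 0 r)
      (psiAux_cont.intervalIntegrable r t)]
    ring
  rw [this]
  exact Real.continuous_exp.comp ((continuous_const.mul (continuous_const.sub hP)).neg)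

lemma Gaux_cont (c : ℝ) : Continuous (Gaux c) := by
  have hP : Continuous fun x => ∫ σ in (0:ℝ)..x, psiAux σ :=
    intervalIntegral.continuous_primitive (fun a b => psiAux_cont.intervalIntegrable a b) 0
  have hU : Continuous (Function.uncurry fun t r =>
      Real.exp (-(c * ∫ σ in r..t, psiAux σ))) := by
    have : (Function.uncurry fun t r => Real.exp (-(c * ∫ σ in r..t, psiAux σ)))
        = fun p : ℝ × ℝ => Real.exp (-(c * ((∫ σ in (0:ℝ)..p.1, psiAux σ)
            - ∫ σ in (0:ℝ)..p.2, psiAux σ))) := by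
      funext p
      simp only [Function.uncurry]
      congr 2
      rw [← integral_add_adjacent_intervals (psiAux_cont.intervalIntegrable 0 p.2)
        (psiAux_cont.intervalIntegrable p.2 p.1)]
      ring
    rw [this]
    exact Real.continuous_exp.comp
      ((continuous_const.mul ((hP.comp continuous_fst).sub (hP.comp continuous_snd))).neg)
  exact intervalIntegral.continuous_parametric_intervalIntegral_of_continuous hU continuous_id

lemma Gaux_nonneg (c t : ℝ) (ht : 1 ≤ t) : 0 ≤ Gaux c t :=
  intervalIntegral.integral_nonneg ht (fun r _ => (Real.exp_pos _).le)

lemma exp_integral_aux {a : ℝ} (ha : a ≠ 0) (b t : ℝ) :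
    (∫ r in b..t, Real.exp (a * r - a * t)) = Real.exp (a * t - a * t) / a - Real.exp (a * b - a * t) / a := by
  have hD : ∀ r ∈ Set.uIcc b t,
      HasDerivAt (fun r => Real.exp (a * r - a * t) / a) (Real.exp (a * r - a * t)) r := by
    intro r _
    have h1 : HasDerivAt (fun r : ℝ => a * r - a * t) a r := by
      simpa using ((hasDerivAt_id r).const_mul a).sub_const (a * t)
    have := (h1.exp).div_const a
    rwa [mul_div_cancel_right₀ _ ha] at this
  rw [intervalIntegral.integral_eq_sub_of_hasDerivAt hD
    ((Real.continuous_exp.comp ((continuous_const.mul continuous_id).sub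
      continuous_const)).intervalIntegrable b t)]

lemma Gaux_lb {c : ℝ} (hc : 0 < c) {t : ℝ} (ht : 2 ≤ t) :
    (1 - Real.exp (-(2*c))) / (c * (t * Real.log (Real.exp 1 + t))) ≤ Gaux c t := by
  set a := c * psiAux t with ha_def
  have hψt : 2 ≤ psiAux t := le_trans ht (psiAux_lb (by linarith))
  have ha : 0 < a := by positivity
  have ht1 : (1:ℝ) ≤ t := by linarith
  -- pointwise bound on the integrand
  have hpt : ∀ r ∈ Set.Icc (1:ℝ) t,
      Real.exp (a * r - a * t) ≤ Real.exp (-(c * ∫ σ in r..t, psiAux σ)) := by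
    intro r hr
    apply Real.exp_le_exp.mpr
    have hint : (∫ σ in r..t, psiAux σ) ≤ psiAux t * (t - r) := by
      have : (∫ σ in r..t, psiAux σ) ≤ ∫ _ in r..t, psiAux t := by
        apply intervalIntegral.integral_mono_on hr.2 (psiAux_cont.intervalIntegrable r t)
          (_root_.intervalIntegrable_const)
        exact fun σ hσ => psiAux_mono hσ.2
      simpa [mul_comm] using this
    have := mul_le_mul_of_nonneg_left hint hc.le
    rw [ha_def]
    nlinarith
  -- compute the lower integral
  have hcomp : (∫ r in (1:ℝ)..t, Real.exp (a * r - a * t))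
      = 1 / a - Real.exp (a * 1 - a * t) / a := by
    rw [exp_integral_aux ha.ne' 1 t]
    simp
  have hmono : (∫ r in (1:ℝ)..t, Real.exp (a * r - a * t)) ≤ Gaux c t := by
    apply intervalIntegral.integral_mono_on ht1
      ((Real.continuous_exp.comp ((continuous_const.mul continuous_id).sub
        continuous_const)).intervalIntegrable 1 t) ?_ hpt
    · exact (contInnerExp c t).intervalIntegrable 1 t
  calc (1 - Real.exp (-(2*c))) / (c * (t * Real.log (Real.exp 1 + t)))
      ≤ 1 / a - Real.exp (a * 1 - a * t) / a := by
        have hnum : Real.exp (a * 1 - a * t) ≤ Real.exp (-(2*c)) := by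
          apply Real.exp_le_exp.mpr
          nlinarith
        have hden : a ≤ c * (t * Real.log (Real.exp 1 + t)) := by
          have h1 := psiAux_ub (show (0:ℝ) ≤ t by linarith)
          nlinarith
        rw [div_sub_div_same]
        have hden' : (0:ℝ) < c * (t * Real.log (Real.exp 1 + t)) := lt_of_lt_of_le ha hden
        have h01 : Real.exp (-(2*c)) < 1 := Real.exp_lt_one_iff.mpr (by linarith)
        apply div_le_div₀ (by linarith) (by linarith) ha hden
    _ = ∫ r in (1:ℝ)..t, Real.exp (a * r - a * t) := hcomp.symm
    _ ≤ Gaux c t := hmono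

lemma psi_eq {σ : ℝ} (hσ : 0 ≤ σ) :
    (∫ u in (0:ℝ)..σ, Real.log (Real.exp 1 + u)) = psiAux σ := by
  apply intervalIntegral.integral_congr
  intro u hu
  rw [Set.uIcc_of_le hσ] at hu
  simp only [abs_of_nonneg hu.1]

lemma inner_eq (c : ℝ) {t : ℝ} (ht : 1 ≤ t) :
    (∫ r in (1:ℝ)..t, Real.exp (-(c * ∫ σ in r..t, ∫ u in (0:ℝ)..σ, Real.log (Real.exp 1 + u))))
      = Gaux c t := by
  rw [Gaux]
  apply intervalIntegral.integral_congr
  intro r hr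
  rw [Set.uIcc_of_le ht] at hr
  have h : (∫ σ in r..t, ∫ u in (0:ℝ)..σ, Real.log (Real.exp 1 + u))
      = ∫ σ in r..t, psiAux σ :=
    intervalIntegral.integral_congr fun σ hσ =>
      psi_eq (le_trans (le_trans zero_le_one (le_inf hr.1 ht)) hσ.1)
  simp only [h]

lemma contOn_aux {x : ℝ} (hx : 2 ≤ x) :
    ContinuousOn (fun t => 1 / (Real.exp 1 + t) / Real.log (Real.exp 1 + t))
      (Set.Icc (2:ℝ) x) := by
  have hmem : ∀ t ∈ Set.Icc (2:ℝ) x, (0:ℝ) < Real.exp 1 + t := by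
    intro t htm
    have := Real.exp_pos 1
    have h2 := htm.1
    linarith
  have hlog : ∀ t ∈ Set.Icc (2:ℝ) x, Real.log (Real.exp 1 + t) ≠ 0 := by
    intro t htm
    have := Real.exp_pos 1
    exact (Real.log_pos (by linarith [htm.1])).ne'
  apply ContinuousOn.div
  · exact continuousOn_const.div ((continuous_const.add continuous_id).continuousOn)
      (fun t htm => (hmem t htm).ne')
  · exact ((continuous_const.add continuous_id).continuousOn).log
      (fun t htm => (hmem t htm).ne')
  · exact hlog

lemma loglog_integral {x : ℝ} (hx : 2 ≤ x) :
    (∫ t in (2:ℝ)..x, 1 / (Real.exp 1 + t) / Real.log (Real.exp 1 + t))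
      = Real.log (Real.log (Real.exp 1 + x)) - Real.log (Real.log (Real.exp 1 + 2)) := by
  have hD : ∀ t ∈ Set.uIcc (2:ℝ) x,
      HasDerivAt (fun t => Real.log (Real.log (Real.exp 1 + t)))
        (1 / (Real.exp 1 + t) / Real.log (Real.exp 1 + t)) t := by
    intro t htm
    rw [Set.uIcc_of_le hx] at htm
    have he := Real.exp_pos 1
    have hpos : (0:ℝ) < Real.exp 1 + t := by linarith [htm.1]
    have h1 : HasDerivAt (fun t : ℝ => Real.exp 1 + t) 1 t := (hasDerivAt_id t).const_add _
    have h2 := h1.log hpos.ne'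
    have hlogpos : 0 < Real.log (Real.exp 1 + t) := Real.log_pos (by linarith [htm.1])
    exact h2.log hlogpos.ne'
  apply intervalIntegral.integral_eq_sub_of_hasDerivAt hD
  exact ((contOn_aux hx).mono (by rw [Set.uIcc_of_le hx])).intervalIntegrable

/-- Condition (1.1) holds for `ψ σ = ∫₀^σ log(e + u) du`, uniformly in the constant `c > 0`:
`∫₁^∞ ∫₁ᵗ exp(-c ∫ᵣᵗ ψ(σ) dσ) dr dt = ∞`. -/
theorem stmt_2 (c : ℝ) (hc : 0 < c) :
    Tendsto (fun x : ℝ => ∫ t in (1:ℝ)..x, ∫ r in (1:ℝ)..t,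
      Real.exp (-(c * ∫ σ in r..t, ∫ u in (0:ℝ)..σ, Real.log (Real.exp 1 + u))))
      atTop atTop := by
  set K := 1 - Real.exp (-(2*c)) with hK
  have hKpos : 0 < K := by
    have : Real.exp (-(2*c)) < 1 := Real.exp_lt_one_iff.mpr (by linarith)
    simp only [hK]; linarith
  have hB : Tendsto (fun x : ℝ => K / c *
      (Real.log (Real.log (Real.exp 1 + x)) - Real.log (Real.log (Real.exp 1 + 2))))
      atTop atTop := by
    apply Tendsto.const_mul_atTop (by positivity)
    simp only [sub_eq_add_neg]
    apply tendsto_atTop_add_const_right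
    exact Real.tendsto_log_atTop.comp (Real.tendsto_log_atTop.comp
      (tendsto_atTop_add_const_left atTop _ tendsto_id))
  apply tendsto_atTop_mono' atTop _ hB
  filter_upwards [eventually_ge_atTop (2:ℝ)] with x hx
  have hx1 : (1:ℝ) ≤ x := by linarith
  have hFx : (∫ t in (1:ℝ)..x, ∫ r in (1:ℝ)..t,
      Real.exp (-(c * ∫ σ in r..t, ∫ u in (0:ℝ)..σ, Real.log (Real.exp 1 + u))))
      = ∫ t in (1:ℝ)..x, Gaux c t := by
    apply intervalIntegral.integral_congr
    intro t htm
    rw [Set.uIcc_of_le hx1] at htm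
    exact inner_eq c htm.1
  have hsplit : (∫ t in (1:ℝ)..x, Gaux c t)
      = (∫ t in (1:ℝ)..2, Gaux c t) + ∫ t in (2:ℝ)..x, Gaux c t :=
    (integral_add_adjacent_intervals ((Gaux_cont c).intervalIntegrable 1 2)
      ((Gaux_cont c).intervalIntegrable 2 x)).symm
  have h12 : 0 ≤ ∫ t in (1:ℝ)..2, Gaux c t :=
    intervalIntegral.integral_nonneg one_le_two (fun t htm => Gaux_nonneg c t htm.1)
  have h2x : K / c * (Real.log (Real.log (Real.exp 1 + x))
      - Real.log (Real.log (Real.exp 1 + 2))) ≤ ∫ t in (2:ℝ)..x, Gaux c t := by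
    rw [← loglog_integral hx, ← intervalIntegral.integral_const_mul]
    apply intervalIntegral.integral_mono_on hx
      (((contOn_aux hx).const_smul (K / c)).mono
        (by rw [Set.uIcc_of_le hx])).intervalIntegrable
      ((Gaux_cont c).intervalIntegrable 2 x)
    intro t htm
    have he := Real.exp_pos 1
    have ht2 := htm.1
    have hlogpos : 0 < Real.log (Real.exp 1 + t) := Real.log_pos (by linarith)
    have step1 : K / c * (1 / (Real.exp 1 + t) / Real.log (Real.exp 1 + t))
        = K / (c * ((Real.exp 1 + t) * Real.log (Real.exp 1 + t))) := by
      field_simp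
    have step2 : K / (c * ((Real.exp 1 + t) * Real.log (Real.exp 1 + t)))
        ≤ K / (c * (t * Real.log (Real.exp 1 + t))) := by
      apply div_le_div_of_nonneg_left hKpos.le (by positivity) (mul_le_mul_of_nonneg_left (mul_le_mul_of_nonneg_right (by linarith : t ≤ Real.exp 1 + t) hlogpos.le) hc.le)
    calc K / c * (1 / (Real.exp 1 + t) / Real.log (Real.exp 1 + t))
        = K / (c * ((Real.exp 1 + t) * Real.log (Real.exp 1 + t))) := step1
      _ ≤ K / (c * (t * Real.log (Real.exp 1 + t))) := step2
      _ ≤ Gaux c t := Gaux_lb hc ht2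
  rw [hFx, hsplit]
  linarith
end

section
/- For every constant c > 0, ∫₁^∞ ( ∫₁^t exp( −c ∫ᵣ^t (1 + σ) log(e + σ) dσ ) dr ) dt = ∞. -/
open MeasureTheory intervalIntegral Filter

noncomputable section StmtAux

private def psi (σ : ℝ) : ℝ := (1 + σ) * Real.log (Real.exp 1 + σ)

private def Phi (t : ℝ) : ℝ := ∫ σ in (1:ℝ)..t, psi σ

private lemma one_lt_e : (1:ℝ) < Real.exp 1 := by
  have := Real.add_one_lt_exp (x := 1) one_ne_zero
  linarith

private lemma psi_contOn : ContinuousOn psi (Set.Ici 0) := by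
  apply ContinuousOn.mul
  · fun_prop
  · apply ContinuousOn.log
    · fun_prop
    · intro σ hσ
      have : (0:ℝ) < Real.exp 1 := Real.exp_pos 1
      have : (0:ℝ) ≤ σ := hσ
      positivity

private lemma one_le_log {σ : ℝ} (hσ : 0 ≤ σ) : 1 ≤ Real.log (Real.exp 1 + σ) := by
  have h := Real.log_le_log (Real.exp_pos 1) (by linarith : Real.exp 1 ≤ Real.exp 1 + σ)
  rwa [Real.log_exp] at h

private lemma psi_nonneg {σ : ℝ} (hσ : 0 ≤ σ) : 0 ≤ psi σ := by
  have := one_le_log hσ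
  unfold psi; nlinarith

private lemma psi_mono {σ t : ℝ} (hσ : 0 ≤ σ) (hσt : σ ≤ t) : psi σ ≤ psi t := by
  have h1 := one_le_log hσ
  have h2 : Real.log (Real.exp 1 + σ) ≤ Real.log (Real.exp 1 + t) := by
    apply Real.log_le_log _ (by linarith)
    have := Real.exp_pos 1; linarith
  unfold psi
  have : (0:ℝ) ≤ 1 + σ := by linarith
  nlinarith

private lemma psi_intble {a b : ℝ} (ha : 0 ≤ a) (hb : 0 ≤ b) :
    IntervalIntegrable psi volume a b := by
  apply (psi_contOn.mono ?_).intervalIntegrable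
  intro x hx
  exact le_trans (le_min ha hb) hx.1

private lemma integral_psi_eq {r t : ℝ} (hr : 1 ≤ r) (ht : 1 ≤ t) :
    ∫ σ in r..t, psi σ = Phi t - Phi r :=
  (intervalIntegral.integral_interval_sub_left
    (psi_intble zero_le_one (by linarith)) (psi_intble zero_le_one (by linarith))).symm

private lemma Phi_contOn {x : ℝ} (hx : 1 ≤ x) : ContinuousOn Phi (Set.Icc 1 x) := by
  have h : Set.uIcc (1:ℝ) x = Set.Icc 1 x := Set.uIcc_of_le hx
  have hint : IntegrableOn psi (Set.uIcc 1 x) volume := by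
    rw [h]
    exact (psi_contOn.mono (by intro y hy; exact le_trans zero_le_one hy.1)).integrableOn_Icc
  have := intervalIntegral.continuousOn_primitive_interval (a := (1:ℝ)) (b := x) hint
  rwa [h] at this

/-- Key difference bound. -/
private lemma Phi_sub_le {r t : ℝ} (hr : 1 ≤ r) (hrt : r ≤ t) :
    Phi t - Phi r ≤ (t - r) * psi t := by
  rw [← integral_psi_eq hr (by linarith)]
  have h1 : (∫ σ in r..t, psi σ) ≤ ∫ _σ in r..t, psi t := by
    apply intervalIntegral.integral_mono_on hrt (psi_intble (by linarith) (by linarith))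
      intervalIntegrable_const
    intro σ hσ
    exact psi_mono (by linarith [hσ.1]) hσ.2
  simpa [smul_eq_mul] using h1

private lemma hasDeriv_LL {t : ℝ} (ht : 0 ≤ t) :
    HasDerivAt (fun s => Real.log (Real.log (Real.exp 1 + s)))
      (((Real.exp 1 + t) * Real.log (Real.exp 1 + t))⁻¹) t := by
  have he := one_lt_e
  have h1 : (1:ℝ) < Real.exp 1 + t := by linarith
  have hlogpos : 0 < Real.log (Real.exp 1 + t) := Real.log_pos h1
  have h1' : HasDerivAt (fun s : ℝ => Real.exp 1 + s) 1 t := (hasDerivAt_id t).const_add _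
  have h2 : HasDerivAt (fun s => Real.log (Real.exp 1 + s)) ((Real.exp 1 + t)⁻¹) t := by
    simpa using h1'.log (by linarith : Real.exp 1 + t ≠ 0)
  have h3 := h2.log hlogpos.ne'
  convert h3 using 1
  rw [mul_inv]
  ring

end StmtAux

/-- Condition (1.1) holds for `ψ σ = (1 + σ) log(e + σ)`, uniformly in the constant `c > 0`:
`∫₁^∞ ∫₁ᵗ exp(-c ∫ᵣᵗ (1+σ) log(e+σ) dσ) dr dt = ∞`. -/
theorem stmt_3 (c : ℝ) (hc : 0 < c) :
    Tendsto (fun x : ℝ => ∫ t in (1:ℝ)..x, ∫ r in (1:ℝ)..t,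
      Real.exp (-(c * ∫ σ in r..t, (1 + σ) * Real.log (Real.exp 1 + σ))))
      atTop atTop := by
  have he := one_lt_e
  set L : ℝ → ℝ := fun s => Real.log (Real.log (Real.exp 1 + s)) with hL
  set T : ℝ := max 2 (1/c) with hTdef
  have hT2 : (2:ℝ) ≤ T := le_max_left _ _
  have hT1 : (1:ℝ) ≤ T := by linarith
  have hTc : 1/c ≤ T := le_max_right _ _
  set K : ℝ := (c * Real.exp 1)⁻¹ with hKdef
  have hKpos : 0 < K := by
    have := Real.exp_pos 1; positivity
  -- the lower-bound function tends to atTop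
  have hLtop : Tendsto L atTop atTop := by
    apply Real.tendsto_log_atTop.comp
    apply Real.tendsto_log_atTop.comp
    exact tendsto_atTop_add_const_left atTop (Real.exp 1) tendsto_id
  have lb_tendsto : Tendsto (fun x => K * (L x - L T)) atTop atTop := by
    apply Tendsto.const_mul_atTop hKpos
    exact tendsto_atTop_add_const_right atTop (-(L T)) hLtop
  refine tendsto_atTop_mono' atTop ?_ lb_tendsto
  filter_upwards [eventually_ge_atTop T] with x hx
  -- main estimate for x ≥ T
  have hx1 : (1:ℝ) ≤ x := le_trans hT1 hx
  -- the factorized inner integral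
  set H : ℝ → ℝ := fun t => ∫ r in (1:ℝ)..t, Real.exp (c * Phi r) with hHdef
  set g : ℝ → ℝ := fun t => Real.exp (-(c * Phi t)) * H t with hgdef
  have hPhiC : ContinuousOn Phi (Set.Icc 1 x) := Phi_contOn hx1
  have hexpC : ContinuousOn (fun r => Real.exp (c * Phi r)) (Set.Icc 1 x) :=
    Real.continuous_exp.comp_continuousOn (continuousOn_const.mul hPhiC)
  have huIcc : Set.uIcc (1:ℝ) x = Set.Icc 1 x := Set.uIcc_of_le hx1
  have hHC : ContinuousOn H (Set.Icc 1 x) := by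
    have hint : IntegrableOn (fun r => Real.exp (c * Phi r)) (Set.uIcc 1 x) volume := by
      rw [huIcc]; exact hexpC.integrableOn_Icc
    have := intervalIntegral.continuousOn_primitive_interval (a := (1:ℝ)) (b := x) hint
    rwa [huIcc] at this
  have hgC : ContinuousOn g (Set.Icc 1 x) :=
    (Real.continuous_exp.comp_continuousOn (continuousOn_const.mul hPhiC).neg).mul hHC
  -- inner integral equals g on [1, x]
  have heq : ∀ t ∈ Set.Icc (1:ℝ) x,
      (∫ r in (1:ℝ)..t, Real.exp (-(c * ∫ σ in r..t, (1 + σ) * Real.log (Real.exp 1 + σ))))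
        = g t := by
    intro t ht
    have ht1 : (1:ℝ) ≤ t := ht.1
    have hcongr : Set.EqOn
        (fun r => Real.exp (-(c * ∫ σ in r..t, (1 + σ) * Real.log (Real.exp 1 + σ))))
        (fun r => Real.exp (-(c * Phi t)) * Real.exp (c * Phi r)) (Set.uIcc 1 t) := by
      intro r hr
      rw [Set.uIcc_of_le ht1] at hr
      have hr1 : (1:ℝ) ≤ r := hr.1
      have : (∫ σ in r..t, (1 + σ) * Real.log (Real.exp 1 + σ)) = Phi t - Phi r := by
        simpa [psi] using integral_psi_eq hr1 ht1
      simp only [this, ← Real.exp_add]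
      ring_nf
    rw [intervalIntegral.integral_congr hcongr, intervalIntegral.integral_const_mul]
  -- g is nonneg on [1, x]
  have hgnonneg : ∀ t ∈ Set.Icc (1:ℝ) x, 0 ≤ g t := by
    intro t ht
    apply mul_nonneg (Real.exp_nonneg _)
    exact intervalIntegral.integral_nonneg ht.1 fun r _ => Real.exp_nonneg _
  -- integrability of g on subintervals
  have hgint : ∀ a b : ℝ, a ∈ Set.Icc (1:ℝ) x → b ∈ Set.Icc (1:ℝ) x →
      IntervalIntegrable g volume a b := by
    intro a b ha hb
    apply (hgC.mono ?_).intervalIntegrable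
    exact Set.uIcc_subset_Icc ha hb
  have hTmem : T ∈ Set.Icc (1:ℝ) x := ⟨hT1, hx⟩
  have h1mem : (1:ℝ) ∈ Set.Icc (1:ℝ) x := ⟨le_refl _, hx1⟩
  have hxmem : x ∈ Set.Icc (1:ℝ) x := ⟨hx1, le_refl _⟩
  -- pointwise lower bound on [T, x]
  have hpt : ∀ t ∈ Set.Icc T x,
      K * ((Real.exp 1 + t) * Real.log (Real.exp 1 + t))⁻¹ ≤ g t := by
    intro t ht
    have ht2 : (2:ℝ) ≤ t := le_trans hT2 ht.1
    have ht1 : (1:ℝ) ≤ t := by linarith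
    have htx : t ≤ x := ht.2
    set M : ℝ := psi t with hMdef
    have hlog1 : 1 ≤ Real.log (Real.exp 1 + t) := one_le_log (by linarith)
    have hMge : 1 + t ≤ M := by
      have : (0:ℝ) ≤ 1 + t := by linarith
      rw [hMdef]; unfold psi; nlinarith
    have hMpos : 0 < M := lt_of_lt_of_le (by linarith) hMge
    have hcM : 1 ≤ c * M := by
      have h1c : 1/c ≤ t := le_trans hTc ht.1
      have : 1 ≤ c * t := by
        rw [div_le_iff₀ hc] at h1c; linarith [mul_comm t c]
      nlinarith
    set δ : ℝ := (c * M)⁻¹ with hδdef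
    have hδpos : 0 < δ := by positivity
    have hδ1 : δ ≤ 1 := inv_le_one_of_one_le₀ hcM
    have hδt : 1 ≤ t - δ := by linarith
    have hcMδ : c * M * δ = 1 := mul_inv_cancel₀ (by positivity)
    -- H t ≥ δ * exp (c * Phi t - 1)
    have hH1 : ∫ r in (t - δ)..t, Real.exp (c * Phi r) ≥ δ * Real.exp (c * Phi t - 1) := by
      have hmono : ∀ r ∈ Set.Icc (t - δ) t, Real.exp (c * Phi t - 1) ≤ Real.exp (c * Phi r) := by
        intro r hr
        apply Real.exp_le_exp.mpr
        have hr1 : (1:ℝ) ≤ r := le_trans hδt hr.1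
        have hsub : Phi t - Phi r ≤ (t - r) * M := Phi_sub_le hr1 hr.2
        have htr : t - r ≤ δ := by linarith [hr.1]
        have : c * (Phi t - Phi r) ≤ c * ((t - r) * M) := by
          apply mul_le_mul_of_nonneg_left hsub hc.le
        nlinarith [mul_le_mul_of_nonneg_left htr (mul_pos hc hMpos).le]
      have hle : t - δ ≤ t := by linarith
      have h := intervalIntegral.integral_mono_on hle
        (intervalIntegrable_const : IntervalIntegrable (fun _ => Real.exp (c * Phi t - 1)) volume (t - δ) t)
        (((hexpC).mono (Set.Icc_subset_Icc hδt htx)).intervalIntegrable_of_Icc hle) hmono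
      rw [intervalIntegral.integral_const] at h
      have : (t - (t - δ)) = δ := by ring
      rw [this, smul_eq_mul] at h
      linarith
    have hH2 : δ * Real.exp (c * Phi t - 1) ≤ H t := by
      have hsplit : H t = (∫ r in (1:ℝ)..(t - δ), Real.exp (c * Phi r))
          + ∫ r in (t - δ)..t, Real.exp (c * Phi r) := by
        rw [hHdef]
        exact (intervalIntegral.integral_add_adjacent_intervals
          ((hexpC.mono (Set.uIcc_subset_Icc h1mem ⟨hδt, by linarith⟩)).intervalIntegrable)
          ((hexpC.mono (Set.uIcc_subset_Icc ⟨hδt, by linarith⟩ ⟨ht1, htx⟩)).intervalIntegrable)).symm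
      have hfirst : 0 ≤ ∫ r in (1:ℝ)..(t - δ), Real.exp (c * Phi r) :=
        intervalIntegral.integral_nonneg hδt fun r _ => Real.exp_nonneg _
      rw [hsplit]
      linarith
    have hg_ge : δ * Real.exp (-1 : ℝ) ≤ g t := by
      have : g t ≥ Real.exp (-(c * Phi t)) * (δ * Real.exp (c * Phi t - 1)) := by
        rw [hgdef]
        exact mul_le_mul_of_nonneg_left hH2 (Real.exp_nonneg _)
      have hcalc : Real.exp (-(c * Phi t)) * (δ * Real.exp (c * Phi t - 1))
          = δ * Real.exp (-1 : ℝ) := by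
        rw [mul_comm δ _, ← mul_assoc, ← Real.exp_add]
        ring_nf
      linarith [hcalc ▸ this]
    -- and δ * exp(-1) ≥ K * ((e+t) * log(e+t))⁻¹
    have hfin : K * ((Real.exp 1 + t) * Real.log (Real.exp 1 + t))⁻¹
        ≤ δ * Real.exp (-1 : ℝ) := by
      have hWpos : 0 < (Real.exp 1 + t) * Real.log (Real.exp 1 + t) := by nlinarith
      have hMle : M ≤ (Real.exp 1 + t) * Real.log (Real.exp 1 + t) := by
        rw [hMdef]; unfold psi
        apply mul_le_mul_of_nonneg_right (by linarith) (by linarith)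
      have hinv : ((Real.exp 1 + t) * Real.log (Real.exp 1 + t))⁻¹ ≤ M⁻¹ :=
        inv_anti₀ hMpos hMle
      have hrw : δ * Real.exp (-1 : ℝ) = K * M⁻¹ := by
        rw [hδdef, hKdef, Real.exp_neg, mul_inv, mul_inv]
        ring
      rw [hrw]
      exact mul_le_mul_of_nonneg_left hinv hKpos.le
    linarith
  -- FTC: ∫ in T..x of the lower bound
  have hWcont : ContinuousOn (fun t => ((Real.exp 1 + t) * Real.log (Real.exp 1 + t))⁻¹)
      (Set.Icc T x) := by
    apply ContinuousOn.inv₀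
    · apply ContinuousOn.mul (by fun_prop)
      apply ContinuousOn.log (by fun_prop)
      intro t ht
      have : (2:ℝ) ≤ t := le_trans hT2 ht.1
      positivity
    · intro t ht
      have h2 : (2:ℝ) ≤ t := le_trans hT2 ht.1
      have : 0 < Real.log (Real.exp 1 + t) := Real.log_pos (by linarith)
      positivity
  have hftc : (∫ t in T..x, ((Real.exp 1 + t) * Real.log (Real.exp 1 + t))⁻¹)
      = L x - L T := by
    apply intervalIntegral.integral_eq_sub_of_hasDerivAt
    · intro t ht
      rw [Set.uIcc_of_le hx] at ht
      exact hasDeriv_LL (by linarith [le_trans hT2 ht.1])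
    · exact hWcont.intervalIntegrable_of_Icc hx
  -- assemble
  have houter : (∫ t in (1:ℝ)..x, ∫ r in (1:ℝ)..t,
      Real.exp (-(c * ∫ σ in r..t, (1 + σ) * Real.log (Real.exp 1 + σ)))) = ∫ t in (1:ℝ)..x, g t := by
    apply intervalIntegral.integral_congr
    intro t ht
    rw [huIcc] at ht
    exact heq t ht
  have hsplit : (∫ t in (1:ℝ)..x, g t) = (∫ t in (1:ℝ)..T, g t) + ∫ t in T..x, g t :=
    (intervalIntegral.integral_add_adjacent_intervals (hgint 1 T h1mem hTmem)
      (hgint T x hTmem hxmem)).symm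
  have hfirst : 0 ≤ ∫ t in (1:ℝ)..T, g t :=
    intervalIntegral.integral_nonneg hT1
      fun t ht => hgnonneg t ⟨ht.1, le_trans ht.2 hx⟩
  have hmono : (∫ t in T..x, K * ((Real.exp 1 + t) * Real.log (Real.exp 1 + t))⁻¹)
      ≤ ∫ t in T..x, g t := by
    apply intervalIntegral.integral_mono_on hx
    · exact ((hWcont.const_smul K).intervalIntegrable_of_Icc hx)
    · exact hgint T x hTmem hxmem
    · exact hpt
  have hKeval : (∫ t in T..x, K * ((Real.exp 1 + t) * Real.log (Real.exp 1 + t))⁻¹)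
      = K * (L x - L T) := by
    rw [intervalIntegral.integral_const_mul, hftc]
  rw [houter, hsplit]
  rw [hKeval] at hmono
  linarith
end

section
/- Let E be a nontrivial finite-dimensional real inner product space, let 0 ≤ r ≤ T, let A : [r,T] → L(E,E) be a continuous family of linear operators on E, and let k : [r,T] → ℝ be continuous such that ⟨A(t)v, v⟩ ≥ k(t)‖v‖² for all t ∈ [r,T] and all v ∈ E. Suppose Q : [r,T] → L(E,E) is differentiable with Q(r) = id and Q'(t) = −A(t) ∘ Q(t) for all t ∈ [r,T]. Then the operator norm of Q(t) satisfies ‖Q(t)‖ ≤ exp( −∫ᵣ^t k(s) ds ) for every t ∈ [r,T]. -/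
open MeasureTheory intervalIntegral RealInnerProductSpace

/-- Norm estimate for the damped parallel transport: if `Q` solves the linear operator ODE
`Q' = -A ∘ Q`, `Q r = id` on `[r, T]`, and `⟨A t v, v⟩ ≥ k t ‖v‖²`, then
`‖Q t‖ ≤ exp(-∫ᵣᵗ k)`. -/
theorem stmt_4 {E : Type*} [NormedAddCommGroup E] [InnerProductSpace ℝ E]
    [FiniteDimensional ℝ E] [Nontrivial E]
    (r T : ℝ) (h0r : 0 ≤ r) (hrT : r ≤ T)
    (A : ℝ → E →L[ℝ] E) (hA : ContinuousOn A (Set.Icc r T))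
    (k : ℝ → ℝ) (hk : ContinuousOn k (Set.Icc r T))
    (hAk : ∀ t ∈ Set.Icc r T, ∀ v : E, k t * ‖v‖ ^ 2 ≤ ⟪(A t) v, v⟫)
    (Q : ℝ → E →L[ℝ] E) (hQr : Q r = ContinuousLinearMap.id ℝ E)
    (hQ : ∀ t ∈ Set.Icc r T,
      HasDerivWithinAt Q (-((A t).comp (Q t))) (Set.Icc r T) t) :
    ∀ t ∈ Set.Icc r T, ‖Q t‖ ≤ Real.exp (-(∫ s in r..t, k s)) := by
  intro t ht
  -- continuous extension of `k` to all of `ℝ`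
  set k' : ℝ → ℝ := fun s => k (Set.projIcc r T hrT s) with hk'def
  have hk'cont : Continuous k' := (ContinuousOn.restrict hk).comp continuous_projIcc
  have hk'eq : ∀ s ∈ Set.Icc r T, k' s = k s := fun s hs => by
    simp [hk'def, Set.projIcc_of_mem hrT hs]
  set K : ℝ → ℝ := fun x => ∫ s in r..x, k' s with hKdef
  have hK : ∀ x : ℝ, HasDerivAt K (k' x) x := fun x =>
    intervalIntegral.integral_hasDerivAt_right (hk'cont.intervalIntegrable r x)
      hk'cont.stronglyMeasurable.stronglyMeasurableAtFilter hk'cont.continuousAt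
  have hinteq : ∫ s in r..t, k s = K t := by
    apply intervalIntegral.integral_congr
    intro s hs
    rw [Set.uIcc_of_le ht.1] at hs
    exact (hk'eq s ⟨hs.1, hs.2.trans ht.2⟩).symm
  rw [hinteq]
  have hQcont : ContinuousOn Q (Set.Icc r T) := fun s hs => (hQ s hs).continuousWithinAt
  refine ContinuousLinearMap.opNorm_le_bound _ (Real.exp_nonneg _) (fun v => ?_)
  -- the Lyapunov function
  set φ : ℝ → ℝ := fun s => Real.exp (2 * K s) * ⟪Q s v, Q s v⟫ with hφdef
  have hφcont : ContinuousOn φ (Set.Icc r T) := by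
    apply ContinuousOn.mul
    · exact (Real.continuous_exp.comp (continuous_const.mul
        (continuous_iff_continuousAt.2 fun x => (hK x).continuousAt))).continuousOn
    · exact (hQcont.clm_apply continuousOn_const).inner (hQcont.clm_apply continuousOn_const)
  -- derivative of φ on the interior
  set φ' : ℝ → ℝ := fun x =>
    2 * k' x * Real.exp (2 * K x) * ⟪Q x v, Q x v⟫ +
      Real.exp (2 * K x) * (⟪Q x v, -(A x (Q x v))⟫ + ⟪-(A x (Q x v)), Q x v⟫) with hφ'def
  have hderiv : ∀ x ∈ interior (Set.Icc r T),
      HasDerivWithinAt φ (φ' x) (interior (Set.Icc r T)) x := by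
    intro x hx
    rw [interior_Icc] at hx ⊢
    have hxI : x ∈ Set.Icc r T := ⟨hx.1.le, hx.2.le⟩
    have hu : HasDerivWithinAt (fun s => Q s v) (-(A x (Q x v))) (Set.Ioo r T) x := by
      have := ((hQ x hxI).mono Set.Ioo_subset_Icc_self).clm_apply
        (hasDerivWithinAt_const x _ v)
      simpa using this
    have hexp : HasDerivAt (fun s => Real.exp (2 * K s))
        (Real.exp (2 * K x) * (2 * k' x)) x := (((hK x).const_mul 2).exp)
    have hinner : HasDerivWithinAt (fun s => (⟪Q s v, Q s v⟫ : ℝ))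
        (⟪Q x v, -(A x (Q x v))⟫ + ⟪-(A x (Q x v)), Q x v⟫) (Set.Ioo r T) x :=
      hu.inner ℝ hu
    have := (hexp.hasDerivWithinAt (s := Set.Ioo r T)).mul hinner
    convert this using 1
    · rfl
    · rfl
    · rfl
    simp only [hφ'def]
    ring
  have hφ'nonpos : ∀ x ∈ interior (Set.Icc r T), φ' x ≤ 0 := by
    intro x hx
    rw [interior_Icc] at hx
    have hxI : x ∈ Set.Icc r T := ⟨hx.1.le, hx.2.le⟩
    have h1 : k x * ‖Q x v‖ ^ 2 ≤ ⟪A x (Q x v), Q x v⟫ := hAk x hxI (Q x v)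
    have h2 : k' x = k x := hk'eq x hxI
    have h3 : (⟪Q x v, Q x v⟫ : ℝ) = ‖Q x v‖ ^ 2 := real_inner_self_eq_norm_sq _
    have h4 : (⟪Q x v, -(A x (Q x v))⟫ : ℝ) = -⟪A x (Q x v), Q x v⟫ := by
      rw [real_inner_comm]; simp
    have h5 : (⟪-(A x (Q x v)), Q x v⟫ : ℝ) = -⟪A x (Q x v), Q x v⟫ := by simp
    have hexp := Real.exp_pos (2 * K x)
    simp only [hφ'def, h2, h3, h4, h5]
    nlinarith [hexp]
  have hanti : AntitoneOn φ (Set.Icc r T) :=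
    antitoneOn_of_hasDerivWithinAt_nonpos (convex_Icc r T) hφcont hderiv hφ'nonpos
  have hrmem : r ∈ Set.Icc r T := ⟨le_refl r, hrT⟩
  have hφt : φ t ≤ φ r := hanti hrmem ht ht.1
  have hKr : K r = 0 := intervalIntegral.integral_same
  have hφr : φ r = ‖v‖ ^ 2 := by
    simp [hφdef, hKr, hQr, real_inner_self_eq_norm_sq]
  have hkey : Real.exp (2 * K t) * ‖Q t v‖ ^ 2 ≤ ‖v‖ ^ 2 := by
    have h := hφt
    simp only [hφdef, real_inner_self_eq_norm_sq, hKr, hQr, mul_zero, Real.exp_zero,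
      one_mul, ContinuousLinearMap.id_apply] at h
    exact h
  -- conclude
  have hsq : ‖Q t v‖ ^ 2 ≤ (Real.exp (-K t) * ‖v‖) ^ 2 := by
    have hexp := Real.exp_pos (2 * K t)
    have : (Real.exp (-K t)) ^ 2 = (Real.exp (2 * K t))⁻¹ := by
      rw [← Real.exp_nat_mul]
      rw [← Real.exp_neg]
      ring_nf
    rw [mul_pow, this, inv_mul_eq_div, le_div_iff₀ hexp]
    linarith [hkey, mul_comm (Real.exp (2 * K t)) (‖Q t v‖ ^ 2)]
  calc ‖Q t v‖ = Real.sqrt (‖Q t v‖ ^ 2) := by rw [Real.sqrt_sq (norm_nonneg _)]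
    _ ≤ Real.sqrt ((Real.exp (-K t) * ‖v‖) ^ 2) := Real.sqrt_le_sqrt hsq
    _ = Real.exp (-K t) * ‖v‖ := Real.sqrt_sq (by positivity)
end

section
/- Let t > 0, let K : [0,t] → ℝ be continuous, and set A(s) = ∫₀^s exp( 2∫₀^r K(u) du ) dr for s ∈ [0,t]. For every ε > 0 there exists a unique r(ε) ∈ (0,t) such that A(r(ε)) = A(t)/(1 + 2ε), and lim_{ε→0⁺} (t − r(ε))/ε = 2∫₀^t exp( −2∫ᵤ^t K(τ) dτ ) du. -/
open MeasureTheory intervalIntegral Filter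

/-- Part (e) of the proof of Theorem 4.3: with `A s = ∫₀ˢ exp(2∫₀ʳ K)`, for every `ε > 0` there
is a unique `r(ε) ∈ (0, t)` with `A (r ε) = A t / (1 + 2ε)`, and
`(t - r ε)/ε → 2 ∫₀ᵗ exp(-2∫ᵤᵗ K(τ) dτ) du` as `ε → 0⁺`. -/
theorem stmt_7 (t : ℝ) (ht : 0 < t) (K : ℝ → ℝ) (hK : ContinuousOn K (Set.Icc 0 t))
    (A : ℝ → ℝ)
    (hA : ∀ s, A s = ∫ r in (0:ℝ)..s, Real.exp (2 * ∫ u in (0:ℝ)..r, K u)) :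
    (∀ ε : ℝ, 0 < ε → ∃! r : ℝ, r ∈ Set.Ioo 0 t ∧ A r = A t / (1 + 2 * ε)) ∧
    (∀ r : ℝ → ℝ, (∀ ε : ℝ, 0 < ε → r ε ∈ Set.Ioo 0 t ∧ A (r ε) = A t / (1 + 2 * ε)) →
      Tendsto (fun ε : ℝ => (t - r ε) / ε) (nhdsWithin 0 (Set.Ioi 0))
        (nhds (2 * ∫ u in (0:ℝ)..t, Real.exp (-(2 * ∫ τ in u..t, K τ))))) := by
  set g : ℝ → ℝ := fun r => Real.exp (2 * ∫ u in (0:ℝ)..r, K u) with hg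
  have huIcc : Set.uIcc (0:ℝ) t = Set.Icc 0 t := Set.uIcc_of_le ht.le
  have hKint : ∀ a b : ℝ, a ∈ Set.Icc (0:ℝ) t → b ∈ Set.Icc (0:ℝ) t →
      IntervalIntegrable K volume a b := fun a b ha hb =>
    (hK.mono (Set.uIcc_subset_Icc ha hb)).intervalIntegrable
  have hKInt : IntegrableOn K (Set.uIcc 0 t) := by
    rw [huIcc]; exact hK.integrableOn_Icc
  have hφcont : ContinuousOn (fun s => ∫ u in (0:ℝ)..s, K u) (Set.Icc 0 t) := by
    rw [← huIcc]; exact intervalIntegral.continuousOn_primitive_interval hKInt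
  have hgcont : ContinuousOn g (Set.Icc 0 t) :=
    Real.continuous_exp.comp_continuousOn ((continuous_const.continuousOn).mul hφcont)
  have hgpos : ∀ r, 0 < g r := fun r => Real.exp_pos _
  have hgint : ∀ a b : ℝ, a ∈ Set.Icc (0:ℝ) t → b ∈ Set.Icc (0:ℝ) t →
      IntervalIntegrable g volume a b := fun a b ha hb =>
    (hgcont.mono (Set.uIcc_subset_Icc ha hb)).intervalIntegrable
  have h0m : (0:ℝ) ∈ Set.Icc (0:ℝ) t := Set.left_mem_Icc.2 ht.le
  have htm : t ∈ Set.Icc (0:ℝ) t := Set.right_mem_Icc.2 ht.le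
  have hAsub : ∀ a b : ℝ, a ∈ Set.Icc (0:ℝ) t → b ∈ Set.Icc (0:ℝ) t →
      A b - A a = ∫ x in a..b, g x := by
    intro a b ha hb
    rw [hA, hA]
    exact intervalIntegral.integral_interval_sub_left (hgint 0 b h0m hb) (hgint 0 a h0m ha)
  have hmono : StrictMonoOn A (Set.Icc 0 t) := by
    intro a ha b hb hab
    have hpos : 0 < ∫ x in a..b, g x :=
      intervalIntegral.intervalIntegral_pos_of_pos_on (hgint a b ha hb)
        (fun x _ => hgpos x) hab
    have := hAsub a b ha hb
    linarith
  have hAcont : ContinuousOn A (Set.Icc 0 t) := by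
    have : ContinuousOn (fun s => ∫ x in (0:ℝ)..s, g x) (Set.Icc 0 t) := by
      rw [← huIcc]
      exact intervalIntegral.continuousOn_primitive_interval (by
        rw [huIcc]; exact hgcont.integrableOn_Icc)
    exact this.congr fun s _ => hA s
  have hA0 : A 0 = 0 := by rw [hA]; simp
  have hAtpos : 0 < A t := by
    have := hmono h0m htm ht
    rwa [hA0] at this
  have existsUnique : ∀ ε : ℝ, 0 < ε →
      ∃! r : ℝ, r ∈ Set.Ioo 0 t ∧ A r = A t / (1 + 2 * ε) := by
    intro ε hε
    have h1 : (1:ℝ) < 1 + 2 * ε := by linarith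
    have hv1 : A t / (1 + 2 * ε) < A t := by
      rw [div_lt_iff₀ (by linarith)]; nlinarith
    have hv0 : 0 < A t / (1 + 2 * ε) := div_pos hAtpos (by linarith)
    have hmem : A t / (1 + 2 * ε) ∈ Set.Ioo (A 0) (A t) := by
      rw [hA0]; exact ⟨hv0, hv1⟩
    obtain ⟨r, hrmem, hrval⟩ := intermediate_value_Ioo ht.le hAcont hmem
    refine ⟨r, ⟨hrmem, hrval⟩, ?_⟩
    rintro y ⟨hymem, hyval⟩
    exact hmono.injOn (Set.mem_of_mem_of_subset hymem Set.Ioo_subset_Icc_self)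
      (Set.mem_of_mem_of_subset hrmem Set.Ioo_subset_Icc_self) (hyval.trans hrval.symm)
  refine ⟨existsUnique, ?_⟩
  intro r hr
  -- r ε → t from the left
  have hrt : Tendsto r (nhdsWithin 0 (Set.Ioi 0)) (nhds t) := by
    rw [tendsto_order]
    constructor
    · intro b hb
      rcases lt_or_ge b 0 with hb0 | hb0
      · filter_upwards [self_mem_nhdsWithin] with ε hε
        exact lt_trans hb0 (hr ε hε).1.1
      · have hbm : b ∈ Set.Icc (0:ℝ) t := ⟨hb0, hb.le⟩
        have hAb : A b < A t := by
          rcases eq_or_lt_of_le hb0 with h | h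
          · rw [← h, hA0]; exact hAtpos
          · exact hmono hbm htm hb
        have hcont : Tendsto (fun ε : ℝ => A t / (1 + 2 * ε)) (nhds 0) (nhds (A t)) := by
          have hc : Continuous fun ε : ℝ => 1 + 2 * ε :=
            continuous_const.add (continuous_const.mul continuous_id)
          have : Tendsto (fun ε : ℝ => 1 + 2 * ε) (nhds (0:ℝ)) (nhds 1) := by
            simpa using hc.tendsto 0
          have h := (tendsto_const_nhds :
            Tendsto (fun _ : ℝ => A t) (nhds 0) (nhds (A t))).div this one_ne_zero; simp only [div_one] at h; exact h
        have hev : ∀ᶠ ε in nhds (0:ℝ), A b < A t / (1 + 2 * ε) :=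
          hcont.eventually (eventually_gt_nhds hAb)
        filter_upwards [hev.filter_mono nhdsWithin_le_nhds, self_mem_nhdsWithin] with ε h1 h2
        by_contra hle
        push_neg at hle
        have : A (r ε) ≤ A b := by
          rcases eq_or_lt_of_le hle with h | h
          · rw [h]
          · exact le_of_lt (hmono (Set.mem_of_mem_of_subset (hr ε h2).1
              Set.Ioo_subset_Icc_self) hbm h)
        rw [(hr ε h2).2] at this
        exact absurd this (not_le.2 h1)
    · intro b hb
      filter_upwards [self_mem_nhdsWithin] with ε hε
      exact lt_trans (hr ε hε).1.2 hb
  -- derivative of A at t from the left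
  have hmeas : StronglyMeasurableAtFilter g (nhdsWithin t (Set.Iic t)) volume := by
    refine ⟨Set.Icc 0 t, ?_, (hgcont.aestronglyMeasurable measurableSet_Icc)⟩
    have h1 : Set.Ioi (0:ℝ) ∈ nhdsWithin t (Set.Iic t) :=
      mem_nhdsWithin_of_mem_nhds (Ioi_mem_nhds ht)
    have h2 : Set.Iic t ∈ nhdsWithin t (Set.Iic t) := self_mem_nhdsWithin
    filter_upwards [h1, h2] with x hx1 hx2
    exact ⟨le_of_lt hx1, hx2⟩
  have hcwa : ContinuousWithinAt g (Set.Iic t) t := by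
    have h2 : ContinuousWithinAt g (Set.Icc 0 t) t := hgcont t htm
    rw [ContinuousWithinAt, nhdsWithin_Icc_eq_nhdsLE ht] at h2
    exact h2
  have hderiv : HasDerivWithinAt (fun u => ∫ x in (0:ℝ)..u, g x) (g t) (Set.Iic t) t :=
    intervalIntegral.integral_hasDerivWithinAt_right (hgint 0 t h0m htm) hmeas hcwa
  have hderivA : HasDerivWithinAt A (g t) (Set.Iic t) t := by
    have : A = fun u => ∫ x in (0:ℝ)..u, g x := funext fun s => hA s
    rw [this]; exact hderiv
  have hslope : Tendsto (slope A t) (nhdsWithin t (Set.Iio t)) (nhds (g t)) := by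
    have := hasDerivWithinAt_iff_tendsto_slope.1 hderivA
    rwa [show Set.Iic t \ {t} = Set.Iio t by
      ext x; simp [Set.mem_diff, lt_iff_le_and_ne]] at this
  -- compose: slope along r ε
  have hrt' : Tendsto r (nhdsWithin 0 (Set.Ioi 0)) (nhdsWithin t (Set.Iio t)) := by
    rw [tendsto_nhdsWithin_iff]
    exact ⟨hrt, by filter_upwards [self_mem_nhdsWithin] with ε hε; exact (hr ε hε).1.2⟩
  have hslope_r : Tendsto (fun ε => (A (r ε) - A t) / (r ε - t))
      (nhdsWithin 0 (Set.Ioi 0)) (nhds (g t)) := by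
    have := hslope.comp hrt'
    refine this.congr fun ε => ?_
    simp [Function.comp, slope_def_field]
  have hinv : Tendsto (fun ε => (t - r ε) / (A t - A (r ε)))
      (nhdsWithin 0 (Set.Ioi 0)) (nhds (g t)⁻¹) := by
    have := hslope_r.inv₀ (ne_of_gt (hgpos t))
    refine this.congr fun ε => ?_
    rw [inv_div, show r ε - t = -(t - r ε) by ring,
      show A (r ε) - A t = -(A t - A (r ε)) by ring, neg_div_neg_eq]
  have hquot2 : Tendsto (fun ε => (A t - A (r ε)) / ε)
      (nhdsWithin 0 (Set.Ioi 0)) (nhds (2 * A t)) := by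
    have hlim : Tendsto (fun ε : ℝ => 2 * A t / (1 + 2 * ε))
        (nhdsWithin 0 (Set.Ioi 0)) (nhds (2 * A t)) := by
      have h1 : Tendsto (fun ε : ℝ => 1 + 2 * ε) (nhds (0:ℝ)) (nhds 1) := by
        have hc : Continuous fun ε : ℝ => 1 + 2 * ε :=
            continuous_const.add (continuous_const.mul continuous_id)
        simpa using hc.tendsto 0
      have h2 := (tendsto_const_nhds :
          Tendsto (fun _ : ℝ => 2 * A t) (nhds 0) (nhds (2 * A t))).div h1 one_ne_zero
      have h3 := h2.mono_left (nhdsWithin_le_nhds (s := Set.Ioi 0)); simp only [div_one] at h3; exact h3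
    refine hlim.congr' ?_
    filter_upwards [self_mem_nhdsWithin] with ε hε
    have hε' : (0:ℝ) < ε := hε
    have h12 : (1:ℝ) + 2 * ε ≠ 0 := by positivity
    rw [(hr ε hε').2]
    field_simp
    ring
  have hprod := hinv.mul hquot2
  have hmain : Tendsto (fun ε : ℝ => (t - r ε) / ε) (nhdsWithin 0 (Set.Ioi 0))
      (nhds ((g t)⁻¹ * (2 * A t))) := by
    refine hprod.congr' ?_
    filter_upwards [self_mem_nhdsWithin] with ε hε
    have hε' : (0:ℝ) < ε := hε
    have hlt : A (r ε) < A t := by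
      rw [(hr ε hε').2, div_lt_iff₀ (by linarith : (0:ℝ) < 1 + 2 * ε)]
      nlinarith
    have hne : A t - A (r ε) ≠ 0 := by linarith
    field_simp
  -- identify the limit value
  have hval : 2 * ∫ u in (0:ℝ)..t, Real.exp (-(2 * ∫ τ in u..t, K τ))
      = (g t)⁻¹ * (2 * A t) := by
    have hcongr : ∀ u ∈ Set.uIcc (0:ℝ) t,
        Real.exp (-(2 * ∫ τ in u..t, K τ)) = g u / g t := by
      intro u hu
      rw [huIcc] at hu
      have hsub : (∫ τ in (0:ℝ)..t, K τ) - ∫ τ in (0:ℝ)..u, K τ = ∫ τ in u..t, K τ :=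
        intervalIntegral.integral_interval_sub_left (hKint 0 t h0m htm) (hKint 0 u h0m hu)
      rw [← hsub, hg]
      rw [← Real.exp_sub]
      congr 1
      ring
    have : (∫ u in (0:ℝ)..t, Real.exp (-(2 * ∫ τ in u..t, K τ)))
        = ∫ u in (0:ℝ)..t, g u / g t := intervalIntegral.integral_congr hcongr
    rw [this, intervalIntegral.integral_div, ← hA t]
    field_simp
  rw [hval]
  exact hmain
end

section
/- Let (X, 𝒜) be a measurable space, let μ and ν be probability measures on X, and let C ≥ 0. Suppose that for every p > 1 and every bounded measurable f : X → [0,∞), ( ∫ f dμ )^p ≤ ( ∫ f^p dν ) · exp( pC/(4(p−1)) ). Then for every bounded measurable f : X → ℝ with f ≥ 1, ∫ log f dμ ≤ log( ∫ f dν ) + C/4. -/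
open MeasureTheory

private lemma aux_integrable {X : Type*} [MeasurableSpace X] (μ : Measure X)
    [IsProbabilityMeasure μ] {g : X → ℝ} (hg : Measurable g) {b : ℝ}
    (h0 : ∀ x, 0 ≤ g x) (hb : ∀ x, g x ≤ b) : Integrable g μ := by
  refine (integrable_const b).mono' hg.aestronglyMeasurable (ae_of_all _ fun x => ?_)
  rw [Real.norm_eq_abs, abs_of_nonneg (h0 x)]
  exact hb x

private lemma aux_one_le_int {X : Type*} [MeasurableSpace X] (μ : Measure X)
    [IsProbabilityMeasure μ] {g : X → ℝ} (hgi : Integrable g μ)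
    (h1 : ∀ x, 1 ≤ g x) : 1 ≤ ∫ x, g x ∂μ := by
  have := integral_mono (integrable_const (1:ℝ)) hgi h1
  simpa using this

/-- Pointwise Jensen for log: `∫ log g dμ ≤ log (∫ g dμ)` for bounded `g ≥ 1`. -/
private lemma aux_jensen_log {X : Type*} [MeasurableSpace X] (μ : Measure X)
    [IsProbabilityMeasure μ] {g : X → ℝ} (hg : Measurable g) {b : ℝ}
    (h1 : ∀ x, 1 ≤ g x) (hb : ∀ x, g x ≤ b) :
    ∫ x, Real.log (g x) ∂μ ≤ Real.log (∫ x, g x ∂μ) := by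
  have hgi : Integrable g μ := aux_integrable μ hg (fun x => le_trans zero_le_one (h1 x)) hb
  set a := ∫ x, g x ∂μ with ha
  have ha1 : 1 ≤ a := aux_one_le_int μ hgi h1
  have hapos : 0 < a := lt_of_lt_of_le one_pos ha1
  have hgpos : ∀ x, 0 < g x := fun x => lt_of_lt_of_le one_pos (h1 x)
  have hli : Integrable (fun x => Real.log (g x)) μ := by
    refine aux_integrable μ hg.log (fun x => Real.log_nonneg (h1 x)) (b := b) (fun x => ?_)
    have := Real.log_le_sub_one_of_pos (hgpos x)
    linarith [hb x]
  have key : ∫ x, (Real.log (g x) - Real.log a) ∂μ ≤ ∫ x, (g x / a - 1) ∂μ := by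
    refine integral_mono (hli.sub (integrable_const _))
      ((hgi.div_const a).sub (integrable_const 1)) (fun x => ?_)
    have h := Real.log_le_sub_one_of_pos (div_pos (hgpos x) hapos)
    rw [Real.log_div (hgpos x).ne' hapos.ne'] at h
    simpa using h
  rw [integral_sub hli (integrable_const _), integral_sub (hgi.div_const a) (integrable_const 1),
    integral_div, integral_const, integral_const] at key
  simp only [measure_univ, probReal_univ, ENNReal.toReal_one, one_smul, ← ha, div_self hapos.ne'] at key
  linarith

/-- Abstract content of the implication (3) ⇒ (4) in Theorem 4.3: if for all `p > 1` and all
bounded measurable `f ≥ 0` one has `(∫ f dμ)ᵖ ≤ (∫ fᵖ dν) · exp(pC/(4(p-1)))`, then for every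
bounded measurable `f ≥ 1`, `∫ log f dμ ≤ log(∫ f dν) + C/4`. -/
theorem stmt_9 {X : Type*} [MeasurableSpace X] (μ ν : Measure X)
    [IsProbabilityMeasure μ] [IsProbabilityMeasure ν] (C : ℝ) (hC : 0 ≤ C)
    (H : ∀ p : ℝ, 1 < p → ∀ f : X → ℝ, Measurable f → (∀ x, 0 ≤ f x) →
      (∃ b : ℝ, ∀ x, f x ≤ b) →
      (∫ x, f x ∂μ) ^ p ≤ (∫ x, (f x) ^ p ∂ν) * Real.exp (p * C / (4 * (p - 1)))) :
    ∀ f : X → ℝ, Measurable f → (∀ x, 1 ≤ f x) → (∃ b : ℝ, ∀ x, f x ≤ b) →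
      ∫ x, Real.log (f x) ∂μ ≤ Real.log (∫ x, f x ∂ν) + C / 4 := by
  rintro f hf hf1 ⟨b, hb⟩
  set b' := max b 1 with hb'def
  have hb'1 : (1:ℝ) ≤ b' := le_max_right _ _
  have hb' : ∀ x, f x ≤ b' := fun x => le_trans (hb x) (le_max_left _ _)
  have hfpos : ∀ x, 0 < f x := fun x => lt_of_lt_of_le one_pos (hf1 x)
  have hfi : Integrable f ν := aux_integrable ν hf (fun x => (hfpos x).le) hb'
  have hI1 : 1 ≤ ∫ x, f x ∂ν := aux_one_le_int ν hfi hf1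
  have hIpos : 0 < ∫ x, f x ∂ν := lt_of_lt_of_le one_pos hI1
  refine le_of_forall_pos_le_add fun ε hε => ?_
  -- choose p large
  set p : ℝ := 1 + max 1 (C / (4 * ε)) with hpdef
  have hpm : p - 1 = max 1 (C / (4 * ε)) := by simp [hpdef]
  have hp1 : 1 < p := by
    have h := le_max_left (1:ℝ) (C / (4 * ε))
    rw [hpdef]; linarith
  have hp0 : 0 < p := lt_trans one_pos hp1
  have hpm0 : 0 < p - 1 := by linarith
  have htail : C / (4 * (p - 1)) ≤ ε := by
    rw [div_le_iff₀ (by positivity)]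
    have h1 : C / (4 * ε) ≤ p - 1 := hpm ▸ le_max_right _ _
    have := (div_le_iff₀ (by positivity : (0:ℝ) < 4 * ε)).mp h1
    nlinarith
  have hsplit : p * C / (4 * (p - 1)) = C / 4 + C / (4 * (p - 1)) := by
    field_simp
    ring
  -- the function g = f^(1/p)
  set g : X → ℝ := fun x => f x ^ (1 / p) with hgdef
  have hg : Measurable g := by measurability
  have hg1 : ∀ x, 1 ≤ g x := fun x => by
    have h := Real.rpow_le_rpow zero_le_one (hf1 x) (by positivity : (0:ℝ) ≤ 1 / p)
    rwa [Real.one_rpow] at h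
  have hgb : ∀ x, g x ≤ b' := fun x => by
    calc g x ≤ b' ^ (1/p) := Real.rpow_le_rpow (hfpos x).le (hb' x) (by positivity)
    _ ≤ b' ^ (1:ℝ) := Real.rpow_le_rpow_of_exponent_le hb'1 (by
        rw [div_le_one hp0]; linarith)
    _ = b' := Real.rpow_one _
  have hgi : Integrable g μ := aux_integrable μ hg (fun x => le_trans zero_le_one (hg1 x)) hgb
  have hJ1 : 1 ≤ ∫ x, g x ∂μ := aux_one_le_int μ hgi hg1
  have hJpos : 0 < ∫ x, g x ∂μ := lt_of_lt_of_le one_pos hJ1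
  -- apply H
  have hHineq := H p hp1 g hg (fun x => le_trans zero_le_one (hg1 x)) ⟨b', hgb⟩
  have hgp : ∀ x, g x ^ p = f x := fun x => by
    rw [hgdef]
    dsimp only
    rw [← Real.rpow_mul (hfpos x).le, one_div_mul_cancel hp0.ne', Real.rpow_one]
  simp only [hgp] at hHineq
  have hlog := Real.log_le_log (Real.rpow_pos_of_pos hJpos p) hHineq
  rw [Real.log_rpow hJpos, Real.log_mul hIpos.ne' (Real.exp_ne_zero _), Real.log_exp,
    hsplit] at hlog
  -- Jensen step
  have hJ := aux_jensen_log μ hg hg1 hgb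
  have hlogg : ∀ x, Real.log (g x) = (1 / p) * Real.log (f x) := fun x => by
    rw [hgdef]; exact Real.log_rpow (hfpos x) _
  simp only [hlogg] at hJ
  rw [integral_const_mul] at hJ
  have hmul := mul_le_mul_of_nonneg_left hJ hp0.le
  rw [← mul_assoc, mul_one_div_cancel hp0.ne', one_mul] at hmul
  calc ∫ x, Real.log (f x) ∂μ ≤ p * Real.log (∫ x, g x ∂μ) := hmul
    _ ≤ Real.log (∫ x, f x ∂ν) + (C / 4 + C / (4 * (p - 1))) := hlog
    _ ≤ Real.log (∫ x, f x ∂ν) + C / 4 + ε := by linarith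
end
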